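/- (Theorem 2, part 2.) Suppose there exist s ≥ 1, pairwise orthonormal vectors u^{(1)},…,u^{(s)} ∈ ℂ^m each satisfying G u^{(k)} = λ_min u^{(k)}, and nonnegative real numbers b_1,…,b_s such that Σ_{k=1}^s b_k |u^{(k)}_i|² = η_i for every i. Then the equal-probability measurement is optimal: the constant vector p_i = λ_min is primal feasible and Σ_i η_i p'_i ≤ λ_min for every primal feasible p'. -/

import Mathlib

open Matrix BigOperators ComplexOrder

noncomputable section

/-- The reciprocal states: columns of `Φ (ΦᴴΦ)⁻¹`. -/
def reciprocal {r m : ℕ} (Φ : Matrix (Fin r) (Fin m) ℂ) : Matrix (Fin r) (Fin m) ℂ :=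
  Φ * (Φᴴ * Φ)⁻¹

/-- The rank-one operator `Q_i = φ̃_i φ̃_iᴴ`. -/
def Qop {r m : ℕ} (Φ : Matrix (Fin r) (Fin m) ℂ) (i : Fin m) : Matrix (Fin r) (Fin r) ℂ :=
  vecMulVec (fun a => reciprocal Φ a i) (fun b => star (reciprocal Φ b i))

/-- `p` is primal feasible: `p_i ≥ 0` and `I - Σ p_i Q_i ⪰ 0`. -/
def PrimalFeasible {r m : ℕ} (Φ : Matrix (Fin r) (Fin m) ℂ) (p : Fin m → ℝ) : Prop :=
  (∀ i, 0 ≤ p i) ∧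
    ((1 : Matrix (Fin r) (Fin r) ℂ) - ∑ i : Fin m, (p i : ℂ) • Qop Φ i).PosSemidef

/-- `(X, z)` is dual feasible: `X ⪰ 0`, `z_i ≥ 0` and `Re Tr(Q_i X) = η_i + z_i`. -/
def DualFeasible {r m : ℕ} (Φ : Matrix (Fin r) (Fin m) ℂ) (η : Fin m → ℝ)
    (X : Matrix (Fin r) (Fin r) ℂ) (z : Fin m → ℝ) : Prop :=
  X.PosSemidef ∧ (∀ i, 0 ≤ z i) ∧ ∀ i, (Matrix.trace (Qop Φ i * X)).re = η i + z i

/- Auxiliary lemmas -/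

lemma aux_star_mul_self (z : ℂ) : star z * z = ((‖z‖ ^ 2 : ℝ) : ℂ) := by
  rw [Complex.star_def, mul_comm, Complex.mul_conj, Complex.normSq_eq_norm_sq]

lemma aux_sum_mulVec {n : ℕ} {ι : Type*} [Fintype ι] (A : ι → Matrix (Fin n) (Fin n) ℂ)
    (v : Fin n → ℂ) : (∑ i, A i) *ᵥ v = ∑ i, A i *ᵥ v := by
  ext j
  simp [Matrix.mulVec, dotProduct, Matrix.sum_apply, Finset.sum_mul]
  rw [Finset.sum_comm]

lemma aux_dotProduct_sum {n : ℕ} {ι : Type*} [Fintype ι] (w : Fin n → ℂ) (f : ι → Fin n → ℂ) :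
    w ⬝ᵥ (∑ i, f i) = ∑ i, w ⬝ᵥ f i := by
  simp [dotProduct, Finset.mul_sum, Finset.sum_apply]
  rw [Finset.sum_comm]

theorem stmt_10 (m r : ℕ) (hm : 0 < m) (hmr : m ≤ r)
    (Φ : Matrix (Fin r) (Fin m) ℂ)
    (hind : LinearIndependent ℂ (fun i : Fin m => fun j : Fin r => Φ j i))
    (η : Fin m → ℝ) (hη : ∀ i, 0 ≤ η i) (hη1 : ∑ i : Fin m, η i = 1)
    (lam : ℝ)
    -- `lam` is the smallest eigenvalue of the Gram matrix `ΦᴴΦ`: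
    (hev : ∃ u : Fin m → ℂ, u ≠ 0 ∧ (Φᴴ * Φ).mulVec u = (lam : ℂ) • u)
    (hmin : ((Φᴴ * Φ) - (lam : ℂ) • 1).PosSemidef)
    (s : ℕ) (hs : 1 ≤ s)
    (u : Fin s → Fin m → ℂ)
    -- the `u^{(k)}` are pairwise orthonormal eigenvectors of `ΦᴴΦ` for `lam`:
    (horth : ∀ k l : Fin s, ∑ i : Fin m, star (u k i) * u l i = if k = l then 1 else 0)
    (heig : ∀ k : Fin s, (Φᴴ * Φ).mulVec (u k) = (lam : ℂ) • u k)
    (b : Fin s → ℝ) (hb : ∀ k, 0 ≤ b k)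
    (hbu : ∀ i : Fin m, ∑ k : Fin s, b k * ‖u k i‖ ^ 2 = η i) :
    PrimalFeasible Φ (fun _ => lam) ∧
      ∀ p' : Fin m → ℝ, PrimalFeasible Φ p' → ∑ i : Fin m, η i * p' i ≤ lam := by
  classical
  set G : Matrix (Fin m) (Fin m) ℂ := Φᴴ * Φ with hGdef
  have hGh : G.IsHermitian := Matrix.isHermitian_conjTranspose_mul_self Φ
  -- `Φ *ᵥ ·` is injective
  have hΦinj : ∀ v : Fin m → ℂ, Φ *ᵥ v = 0 → v = 0 := by
    intro v hv
    have h0 : ∑ i, v i • (fun j : Fin r => Φ j i) = 0 := by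
      funext j
      have := congrFun hv j
      simpa [Matrix.mulVec, dotProduct, mul_comm, Finset.sum_apply] using this
    funext i
    exact Fintype.linearIndependent_iff.mp hind v h0 i
  have hGinj : Function.Injective (G.mulVec) := by
    intro x y hxy
    have h0 : G *ᵥ (x - y) = 0 := by
      rw [mulVec_sub, hxy, sub_self]
    have := hΦinj (x - y) ((Matrix.conjTranspose_mul_self_mulVec_eq_zero Φ _).mp h0)
    exact sub_eq_zero.mp this
  have hGdet : IsUnit G.det :=
    (Matrix.isUnit_iff_isUnit_det _).mp (Matrix.mulVec_injective_iff_isUnit.mp hGinj)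
  have hinvmul : G⁻¹ * G = 1 := Matrix.nonsing_inv_mul _ hGdet
  have hmulinv : G * G⁻¹ = 1 := Matrix.mul_nonsing_inv _ hGdet
  have hGinvh : (G⁻¹)ᴴ = G⁻¹ := hGh.inv
  have hRdef : reciprocal Φ = Φ * G⁻¹ := rfl
  have hRH : (reciprocal Φ)ᴴ = G⁻¹ * Φᴴ := by
    rw [hRdef, conjTranspose_mul, hGinvh]
  have hRΦ : (reciprocal Φ)ᴴ * Φ = 1 := by
    rw [hRH, Matrix.mul_assoc, ← hGdef, hinvmul]
  have hΦR : Φᴴ * reciprocal Φ = 1 := by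
    rw [hRdef, ← Matrix.mul_assoc, ← hGdef, hmulinv]
  have hRG : reciprocal Φ * G = Φ := by
    rw [hRdef, Matrix.mul_assoc, hinvmul, Matrix.mul_one]
  have hcomm : Φ * (reciprocal Φ)ᴴ = reciprocal Φ * Φᴴ := by
    rw [hRH, hRdef, Matrix.mul_assoc]
  -- `0 ≤ lam`
  have hGpsd : G.PosSemidef := Matrix.posSemidef_conjTranspose_mul_self Φ
  have hlam0 : 0 ≤ lam := by
    obtain ⟨u0, hu0ne, hu0⟩ := hev
    have h1 : (0 : ℂ) ≤ star u0 ⬝ᵥ (G *ᵥ u0) := hGpsd.dotProduct_mulVec_nonneg u0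
    rw [hu0, dotProduct_smul, smul_eq_mul] at h1
    have hdot : star u0 ⬝ᵥ u0 = ((∑ i, ‖u0 i‖ ^ 2 : ℝ) : ℂ) := by
      push_cast
      refine Finset.sum_congr rfl fun i _ => ?_
      exact_mod_cast aux_star_mul_self (u0 i)
    have hcpos : 0 < ∑ i, ‖u0 i‖ ^ 2 := by
      rcases (Finset.sum_nonneg fun i _ => sq_nonneg ‖u0 i‖).lt_or_eq with h | h
      · exact h
      · exfalso
        apply hu0ne
        have hz : star u0 ⬝ᵥ u0 = 0 := by rw [hdot, ← h]; simp
        exact dotProduct_star_self_eq_zero.mp hz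
    have hre := (Complex.le_def.mp h1).1
    rw [hdot] at hre
    simp only [Complex.zero_re, Complex.mul_re, Complex.ofReal_re, Complex.ofReal_im,
      mul_zero, sub_zero] at hre
    nlinarith
  -- Part 1 : primal feasibility of the constant vector `lam`
  have hsum : ∑ i : Fin m, (lam : ℂ) • Qop Φ i
      = (lam : ℂ) • (reciprocal Φ * (reciprocal Φ)ᴴ) := by
    rw [← Finset.smul_sum]
    congr 1
    ext a c
    simp [Qop, vecMulVec_apply, Matrix.mul_apply, Matrix.sum_apply, conjTranspose_apply]
  have hfact : (1 : Matrix (Fin r) (Fin r) ℂ) - (lam : ℂ) • (reciprocal Φ * (reciprocal Φ)ᴴ)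
      = (1 - reciprocal Φ * Φᴴ)
        + reciprocal Φ * (G - (lam : ℂ) • 1) * (reciprocal Φ)ᴴ := by
    have : reciprocal Φ * (G - (lam : ℂ) • 1) * (reciprocal Φ)ᴴ
        = reciprocal Φ * Φᴴ - (lam : ℂ) • (reciprocal Φ * (reciprocal Φ)ᴴ) := by
      rw [Matrix.mul_sub, Matrix.mul_smul, Matrix.mul_one, hRG, Matrix.sub_mul,
        Matrix.smul_mul, hcomm]
    rw [this]
    abel
  have hPH : (1 - reciprocal Φ * Φᴴ)ᴴ = 1 - reciprocal Φ * Φᴴ := by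
    rw [conjTranspose_sub, conjTranspose_one, conjTranspose_mul, conjTranspose_conjTranspose,
      hcomm]
  have hPP : (reciprocal Φ * Φᴴ) * (reciprocal Φ * Φᴴ) = reciprocal Φ * Φᴴ := by
    calc (reciprocal Φ * Φᴴ) * (reciprocal Φ * Φᴴ)
        = reciprocal Φ * ((Φᴴ * reciprocal Φ) * Φᴴ) := by
          rw [Matrix.mul_assoc, Matrix.mul_assoc]
      _ = reciprocal Φ * Φᴴ := by rw [hΦR, Matrix.one_mul]
  have hidem : (1 - reciprocal Φ * Φᴴ) * (1 - reciprocal Φ * Φᴴ) = 1 - reciprocal Φ * Φᴴ := by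
    rw [Matrix.mul_sub, Matrix.mul_one, Matrix.sub_mul, Matrix.one_mul, hPP]
    abel
  have hApsd : (1 - reciprocal Φ * Φᴴ).PosSemidef := by
    have heq : 1 - reciprocal Φ * Φᴴ = (1 - reciprocal Φ * Φᴴ)ᴴ * (1 - reciprocal Φ * Φᴴ) := by
      rw [hPH, hidem]
    rw [heq]
    exact Matrix.posSemidef_conjTranspose_mul_self _
  have hBpsd : (reciprocal Φ * (G - (lam : ℂ) • 1) * (reciprocal Φ)ᴴ).PosSemidef :=
    hmin.mul_mul_conjTranspose_same (reciprocal Φ)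
  have hprimal : PrimalFeasible Φ (fun _ => lam) := by
    refine ⟨fun _ => hlam0, ?_⟩
    rw [hsum, hfact]
    exact hApsd.add hBpsd
  refine ⟨hprimal, ?_⟩
  -- Part 2 : optimality
  intro p' hp'
  obtain ⟨hp'0, hp'psd⟩ := hp'
  -- key inequality for each k
  have key : ∀ k : Fin s, ∑ i, p' i * ‖u k i‖ ^ 2 ≤ lam := by
    intro k
    set v : Fin r → ℂ := Φ *ᵥ u k with hvdef
    -- ⟨v, v⟩ = lam
    have h1 : star v ⬝ᵥ v = (lam : ℂ) := by
      have heq : star (u k) ⬝ᵥ (G *ᵥ u k) = star v ⬝ᵥ v := by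
        rw [hGdef, ← mulVec_mulVec, dotProduct_mulVec, vecMul_conjTranspose, star_star]
      rw [← heq, heig k, dotProduct_smul, smul_eq_mul]
      have : star (u k) ⬝ᵥ u k = 1 := by
        have := horth k k
        simpa [dotProduct] using this
      rw [this, mul_one]
    -- ⟨v, Q_i v⟩ = ‖u k i‖²
    have ht : ∀ i, ∑ bb, star (reciprocal Φ bb i) * v bb = u k i := by
      intro i
      have h := congrFun (congrArg (fun M => M *ᵥ u k) hRΦ) i
      simp only [one_mulVec] at h
      rw [← h, ← mulVec_mulVec]
      simp [Matrix.mulVec, dotProduct, conjTranspose_apply, hvdef]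
    have h2 : ∀ i, star v ⬝ᵥ (Qop Φ i *ᵥ v) = star (u k i) * u k i := by
      intro i
      have expand : star v ⬝ᵥ (Qop Φ i *ᵥ v)
          = (∑ a, star (v a) * reciprocal Φ a i) * (∑ bb, star (reciprocal Φ bb i) * v bb) := by
        rw [Finset.sum_mul_sum]
        simp only [dotProduct, Matrix.mulVec, Qop, vecMulVec_apply, Pi.star_apply]
        refine Finset.sum_congr rfl fun a _ => ?_
        rw [Finset.mul_sum]
        refine Finset.sum_congr rfl fun bb _ => ?_
        ring
      rw [expand, ht i]
      congr 1
      have : star (u k i) = star (∑ bb, star (reciprocal Φ bb i) * v bb) := by rw [ht i]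
      rw [this, star_sum]
      refine Finset.sum_congr rfl fun a _ => ?_
      rw [star_mul', star_star]
      exact mul_comm _ _
    -- put together
    have h3 : star v ⬝ᵥ (((1 : Matrix (Fin r) (Fin r) ℂ) - ∑ i, (p' i : ℂ) • Qop Φ i) *ᵥ v)
        = (lam : ℂ) - ((∑ i, p' i * ‖u k i‖ ^ 2 : ℝ) : ℂ) := by
      rw [sub_mulVec, dotProduct_sub, one_mulVec, h1, aux_sum_mulVec, aux_dotProduct_sum]
      congr 1
      push_cast
      refine Finset.sum_congr rfl fun i _ => ?_
      rw [smul_mulVec, dotProduct_smul, smul_eq_mul, h2 i, aux_star_mul_self]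
      push_cast
      ring
    have hpos := hp'psd.dotProduct_mulVec_nonneg v
    rw [h3] at hpos
    have hre := (Complex.le_def.mp hpos).1
    simp only [Complex.zero_re, Complex.sub_re, Complex.ofReal_re] at hre
    linarith
  -- Σ b = 1
  have hnorm : ∀ k : Fin s, ∑ i, ‖u k i‖ ^ 2 = 1 := by
    intro k
    have h := horth k k
    rw [if_pos rfl] at h
    have : ((∑ i, ‖u k i‖ ^ 2 : ℝ) : ℂ) = 1 := by
      push_cast
      rw [← h]
      refine Finset.sum_congr rfl fun i _ => ?_
      exact_mod_cast (aux_star_mul_self (u k i)).symm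
    exact_mod_cast this
  have hbsum : ∑ k, b k = 1 := by
    calc ∑ k, b k = ∑ k, b k * ∑ i, ‖u k i‖ ^ 2 := by
          refine Finset.sum_congr rfl fun k _ => ?_
          rw [hnorm k, mul_one]
      _ = ∑ i, ∑ k, b k * ‖u k i‖ ^ 2 := by
          simp_rw [Finset.mul_sum]
          rw [Finset.sum_comm]
      _ = ∑ i, η i := Finset.sum_congr rfl fun i _ => hbu i
      _ = 1 := hη1
  calc ∑ i, η i * p' i = ∑ k, b k * ∑ i, p' i * ‖u k i‖ ^ 2 := by
        simp_rw [← hbu, Finset.sum_mul, Finset.mul_sum]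
        rw [Finset.sum_comm]
        refine Finset.sum_congr rfl fun k _ => Finset.sum_congr rfl fun i _ => by ring
    _ ≤ ∑ k, b k * lam :=
        Finset.sum_le_sum fun k _ => mul_le_mul_of_nonneg_left (key k) (hb k)
    _ = lam := by rw [← Finset.sum_mul, hbsum, one_mul]
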